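/- Let Γ be a regular nicely distance-balanced graph with valency k = 3, diameter d = 3 and γ(Γ) = 4. Then for every edge x_0 x_1 of Γ we have |D^1_2(x_1,x_0)| = |D^2_1(x_1,x_0)| = 2. -/

import Mathlib

open SimpleGraph Finset

/-- `W_{u,v}`: the set of vertices strictly closer to `u` than to `v`. -/
noncomputable def ndbW {V : Type*} [Fintype V] (G : SimpleGraph V) (u v : V) : Finset V :=
  Finset.univ.filter fun x => G.dist x u < G.dist x v

/-- `D^i_j(u,v)`: the set of vertices at distance `i` from `u` and `j` from `v`. -/
noncomputable def ndbD {V : Type*} [Fintype V] (G : SimpleGraph V) (u v : V) (i j : ℕ) : Finset V :=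
  Finset.univ.filter fun x => G.dist x u = i ∧ G.dist x v = j

/-- `G` is nicely distance-balanced with constant `γ`. -/
def IsNDB {V : Type*} [Fintype V] (G : SimpleGraph V) (γ : ℕ) : Prop :=
  ∀ u v : V, G.Adj u v → (ndbW G u v).card = γ ∧ (ndbW G v u).card = γ

/-- `G` has diameter `d`. -/
def HasDiam {V : Type*} [Fintype V] (G : SimpleGraph V) (d : ℕ) : Prop :=
  (∀ u v : V, G.dist u v ≤ d) ∧ ∃ u v : V, G.dist u v = d

section Helpers

variable {V : Type*} [Fintype V] [DecidableEq V] {G : SimpleGraph V} [DecidableRel G.Adj]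

lemma mem_ndbD {u v x : V} {i j : ℕ} :
    x ∈ ndbD G u v i j ↔ G.dist x u = i ∧ G.dist x v = j := by
  simp [ndbD]

lemma dist_le_adj (hconn : G.Connected) {u v : V} (huv : G.Adj u v) (x : V) :
    G.dist x v ≤ G.dist x u + 1 := by
  have h1 := hconn.dist_triangle (u := x) (v := u) (w := v)
  rwa [(SimpleGraph.dist_eq_one_iff_adj).mpr huv] at h1

lemma dist_step (hconn : G.Connected) {x u : V} {n : ℕ} (hd : G.dist x u = n + 1) :
    ∃ m, G.Adj x m ∧ G.dist m u = n := by
  obtain ⟨p, hp⟩ := SimpleGraph.exists_walk_of_dist_ne_zero (by omega : G.dist x u ≠ 0)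
  cases p with
  | nil => simp_all
  | @cons _ m _ ha q =>
    refine ⟨m, ha, le_antisymm ?_ ?_⟩
    · have h1 : G.dist m u ≤ q.length := SimpleGraph.dist_le q
      simp only [SimpleGraph.Walk.length_cons] at hp
      omega
    · have h2 : G.dist x u ≤ G.dist x m + G.dist m u := hconn.dist_triangle
      have h3 : G.dist x m = 1 := (SimpleGraph.dist_eq_one_iff_adj).mpr ha
      omega

lemma step23 (hconn : G.Connected) {u v y : V} (huv : G.Adj u v)
    (h2 : G.dist y u = 2) (h3 : G.dist y v = 3) :
    ∃ m, G.Adj y m ∧ G.dist m u = 1 ∧ G.dist m v = 2 := by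
  obtain ⟨m, hym, hm⟩ := dist_step hconn (show G.dist y u = 1 + 1 from h2)
  have l1 : G.dist m v ≤ G.dist m u + 1 := dist_le_adj hconn huv m
  have l2 : G.dist y v ≤ G.dist y m + G.dist m v := hconn.dist_triangle
  have l3 : G.dist y m = 1 := (SimpleGraph.dist_eq_one_iff_adj).mpr hym
  exact ⟨m, hym, hm, by omega⟩

lemma card_ndbW (hconn : G.Connected) (hd : ∀ a b : V, G.dist a b ≤ 3) {u v : V}
    (huv : G.Adj u v) :
    (ndbW G u v).card = 1 + (ndbD G u v 1 2).card + (ndbD G u v 2 3).card := by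
  have hset : ndbW G u v = {u} ∪ (ndbD G u v 1 2 ∪ ndbD G u v 2 3) := by
    ext x
    have t1 : G.dist x v ≤ G.dist x u + 1 := dist_le_adj hconn huv x
    have t2 : G.dist x u ≤ G.dist x v + 1 := dist_le_adj hconn huv.symm x
    have e0 : G.dist x u = 0 ↔ x = u := hconn.dist_eq_zero_iff
    have e0' : G.dist x v = 0 ↔ x = v := hconn.dist_eq_zero_iff
    have hne : u ≠ v := huv.ne
    have d1 := hd x u
    have d2 := hd x v
    have h00 : ¬ (G.dist x u = 0 ∧ G.dist x v = 0) := by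
      rintro ⟨a, b⟩
      exact hne ((e0.mp a).symm.trans (e0'.mp b))
    simp only [ndbW, ndbD, mem_filter, mem_union, mem_singleton, mem_univ, true_and, ← e0]
    omega
  have d1 : Disjoint (ndbD G u v 1 2) (ndbD G u v 2 3) := by
    rw [Finset.disjoint_left]
    intro a ha hb
    rw [mem_ndbD] at ha hb
    omega
  have d2 : Disjoint ({u} : Finset V) (ndbD G u v 1 2 ∪ ndbD G u v 2 3) := by
    rw [Finset.disjoint_left]
    intro a ha hb
    simp only [mem_singleton] at ha
    subst ha
    simp only [mem_union, mem_ndbD, SimpleGraph.dist_self] at hb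
    omega
  rw [hset, card_union_of_disjoint d2, card_union_of_disjoint d1, card_singleton]
  ring

lemma nbr_mem (hreg : G.IsRegularOfDegree 3) {v : V} {s : Finset V} (hcard : s.card = 3)
    (hs : ∀ a ∈ s, G.Adj v a) : ∀ m, G.Adj v m → m ∈ s := by
  intro m hm
  have hsub : s ⊆ G.neighborFinset v := fun a ha =>
    (SimpleGraph.mem_neighborFinset G v a).mpr (hs a ha)
  have hle : (G.neighborFinset v).card ≤ s.card := by
    rw [hcard, SimpleGraph.card_neighborFinset_eq_degree, hreg v]
  have heq : s = G.neighborFinset v := Finset.eq_of_subset_of_card_le hsub hle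
  rw [heq]
  exact (SimpleGraph.mem_neighborFinset G v m).mpr hm

lemma exists_third (hreg : G.IsRegularOfDegree 3) {v a b : V}
    (ha : G.Adj v a) (hb : G.Adj v b) (hab : a ≠ b) :
    ∃ c, G.Adj v c ∧ c ≠ a ∧ c ≠ b := by
  have hne : (G.neighborFinset v \ ({a, b} : Finset V)).Nonempty := by
    rw [Finset.sdiff_nonempty]
    intro hsub
    have h1 : (G.neighborFinset v).card ≤ ({a, b} : Finset V).card :=
      Finset.card_le_card hsub
    rw [SimpleGraph.card_neighborFinset_eq_degree, hreg v, Finset.card_pair hab] at h1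
    omega
  obtain ⟨c, hc⟩ := hne
  simp only [Finset.mem_sdiff, SimpleGraph.mem_neighborFinset, Finset.mem_insert,
    Finset.mem_singleton, not_or] at hc
  exact ⟨c, hc.1, hc.2.1, hc.2.2⟩

end Helpers

section Main

variable {V : Type*} [Fintype V] {G : SimpleGraph V}

lemma key [DecidableEq V] [DecidableRel G.Adj] (hconn : G.Connected) (hreg : G.IsRegularOfDegree 3)
    (hd3 : ∀ a b : V, G.dist a b ≤ 3) (hndb : IsNDB G 4)
    {x₀ x₁ : V} (h : G.Adj x₀ x₁) : (ndbD G x₁ x₀ 1 2).card = 2 := by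
  classical
  have hzero : ∀ a b : V, G.dist a b = 0 ↔ a = b := fun a b => hconn.dist_eq_zero_iff
  have hone : ∀ a b : V, G.dist a b = 1 ↔ G.Adj a b := fun a b =>
    SimpleGraph.dist_eq_one_iff_adj
  set A := ndbD G x₁ x₀ 1 2 with hA
  set B := ndbD G x₁ x₀ 2 3 with hB
  -- the first count
  have hAB : 1 + A.card + B.card = 4 := by
    rw [hA, hB, ← card_ndbW hconn hd3 h.symm]
    exact (hndb x₀ x₁ h).2
  -- each elt of B has a neighbour in A
  have stepB : ∀ y ∈ B, ∃ m ∈ A, G.Adj y m := by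
    intro y hy
    rw [hB, mem_ndbD] at hy
    obtain ⟨m, hym, hm1, hm2⟩ := step23 hconn h.symm hy.1 hy.2
    exact ⟨m, mem_ndbD.mpr ⟨hm1, hm2⟩, hym⟩
  -- A ≤ 2
  have hAsub : ∀ a ∈ A, G.Adj x₁ a ∧ a ≠ x₀ := by
    intro a haA
    rw [hA, mem_ndbD] at haA
    refine ⟨((hone a x₁).mp haA.1).symm, ?_⟩
    intro e; subst e; rw [SimpleGraph.dist_self] at haA; omega
  have hAcard : A.card ≤ 2 := by
    have hsub : insert x₀ A ⊆ G.neighborFinset x₁ := by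
      intro a haA
      rcases Finset.mem_insert.mp haA with rfl | haA
      · exact (SimpleGraph.mem_neighborFinset G x₁ a).mpr h.symm
      · exact (SimpleGraph.mem_neighborFinset G x₁ a).mpr (hAsub a haA).1
    have hx₀A : x₀ ∉ A := by
      intro hx; exact (hAsub x₀ hx).2 rfl
    have := Finset.card_le_card hsub
    rw [Finset.card_insert_of_notMem hx₀A, SimpleGraph.card_neighborFinset_eq_degree,
      hreg x₁] at this
    omega
  -- rule out |A| = 0
  have hA0 : A.card ≠ 0 := by
    intro h0
    have hBc : B.card = 3 := by omega
    have : B.Nonempty := Finset.card_pos.mp (by omega)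
    obtain ⟨y, hy⟩ := this
    obtain ⟨m, hmA, _⟩ := stepB y hy
    rw [Finset.card_eq_zero.mp h0] at hmA
    exact absurd hmA (Finset.notMem_empty m)
  -- rule out |A| = 1  (the long case)
  have hA1 : A.card ≠ 1 := by
    intro h1
    obtain ⟨z, hzA⟩ := Finset.card_eq_one.mp h1
    have hz : G.dist z x₁ = 1 ∧ G.dist z x₀ = 2 := by
      have : z ∈ A := by rw [hzA]; exact Finset.mem_singleton_self z
      rwa [hA, mem_ndbD] at this
    obtain ⟨hz1, hz0⟩ := hz
    have hBcard : B.card = 2 := by omega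
    -- every elt of B is a neighbour of z
    have hBadj : ∀ y ∈ B, G.Adj z y := by
      intro y hy
      obtain ⟨m, hmA, hym⟩ := stepB y hy
      rw [hzA, Finset.mem_singleton] at hmA
      subst hmA
      exact hym.symm
    have hyB : ∀ y ∈ B, G.dist y x₁ = 2 ∧ G.dist y x₀ = 3 := by
      intro y hy; rwa [hB, mem_ndbD] at hy
    -- neighbours of z
    have hx₁B : x₁ ∉ B := by
      intro hx; have := (hyB x₁ hx).1; rw [SimpleGraph.dist_self] at this; omega
    have hNz : ∀ m, G.Adj z m → m = x₁ ∨ m ∈ B := by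
      have := nbr_mem hreg (v := z) (s := insert x₁ B)
        (by rw [Finset.card_insert_of_notMem hx₁B, hBcard])
        (by
          intro a haA
          rcases Finset.mem_insert.mp haA with rfl | haA
          · exact (hone z a).mp hz1
          · exact hBadj a haA)
      intro m hm
      have := this m hm
      rcases Finset.mem_insert.mp this with rfl | hmB
      · exact Or.inl rfl
      · exact Or.inr hmB
    -- the third neighbour w of x₁
    have hzx₀ : z ≠ x₀ := by intro e; rw [e, SimpleGraph.dist_self] at hz0; omega
    obtain ⟨w, hw_adj, hw_ne0, hw_nez⟩ := exists_third hreg h.symm ((hone z x₁).mp hz1).symm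
      (Ne.symm hzx₀)
    have hw1 : G.dist w x₁ = 1 := (hone w x₁).mpr hw_adj.symm
    have hw0 : G.dist w x₀ = 1 := by
      have hle : G.dist w x₀ ≤ 2 := by
        have := dist_le_adj hconn h.symm w; omega
      have hne0 : G.dist w x₀ ≠ 0 := by
        intro e; exact hw_ne0 ((hzero w x₀).mp e)
      have hne2 : G.dist w x₀ ≠ 2 := by
        intro e
        have : w ∈ A := by rw [hA, mem_ndbD]; exact ⟨hw1, e⟩
        rw [hzA, Finset.mem_singleton] at this
        exact hw_nez this
      omega
    have hwx₀ : G.Adj w x₀ := (hone w x₀).mp hw0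
    have hwne1 : w ≠ x₁ := hw_adj.ne'
    -- neighbours of x₁ : x₀, z, w
    have hNx₁ : ∀ m, G.Adj x₁ m → m = x₀ ∨ m = z ∨ m = w := by
      have hcard : ({x₀, z, w} : Finset V).card = 3 := by
        rw [Finset.card_insert_of_notMem, Finset.card_insert_of_notMem, Finset.card_singleton]
        · simp only [Finset.mem_singleton]; exact fun e => hw_nez e.symm
        · simp only [Finset.mem_insert, Finset.mem_singleton, not_or]
          exact ⟨Ne.symm hzx₀, Ne.symm hw_ne0⟩
      have := nbr_mem hreg (v := x₁) (s := {x₀, z, w}) hcard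
        (by
          intro a haA
          simp only [Finset.mem_insert, Finset.mem_singleton] at haA
          rcases haA with h1 | h1 | h1 <;> rw [h1]
          · exact h.symm
          · exact ((hone z x₁).mp hz1).symm
          · exact hw_adj)
      intro m hm
      have := this m hm
      simpa using this
    -- A' and B' : the sets for the other direction of edge x₀x₁
    set A' := ndbD G x₀ x₁ 1 2 with hA'
    set B' := ndbD G x₀ x₁ 2 3 with hB'
    have hAB' : 1 + A'.card + B'.card = 4 := by
      rw [hA', hB', ← card_ndbW hconn hd3 h]
      exact (hndb x₀ x₁ h).1
    have stepB' : ∀ p ∈ B', ∃ m ∈ A', G.Adj p m := by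
      intro p hp
      rw [hB', mem_ndbD] at hp
      obtain ⟨m, hpm, hm1, hm2⟩ := step23 hconn h hp.1 hp.2
      exact ⟨m, mem_ndbD.mpr ⟨hm1, hm2⟩, hpm⟩
    have hA'sub : ∀ a ∈ A', G.Adj x₀ a ∧ a ≠ x₁ ∧ a ≠ w := by
      intro a haA
      rw [hA', mem_ndbD] at haA
      refine ⟨((hone a x₀).mp haA.1).symm, ?_, ?_⟩
      · intro e; subst e; rw [SimpleGraph.dist_self] at haA; omega
      · intro e; subst e; omega
    have hA'card : A'.card ≤ 1 := by
      have hsub : insert x₁ (insert w A') ⊆ G.neighborFinset x₀ := by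
        intro a haA
        simp only [Finset.mem_insert] at haA
        rcases haA with rfl | rfl | haA
        · exact (SimpleGraph.mem_neighborFinset G x₀ a).mpr h
        · exact (SimpleGraph.mem_neighborFinset G x₀ a).mpr hwx₀.symm
        · exact (SimpleGraph.mem_neighborFinset G x₀ a).mpr (hA'sub a haA).1
      have hx₁A' : x₁ ∉ insert w A' := by
        simp only [Finset.mem_insert, not_or]
        constructor
        · exact fun e => hwne1 e.symm
        · intro hx; exact (hA'sub x₁ hx).2.1 rfl
      have hwA' : w ∉ A' := fun hx => (hA'sub w hx).2.2 rfl
      have := Finset.card_le_card hsub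
      rw [Finset.card_insert_of_notMem hx₁A', Finset.card_insert_of_notMem hwA',
        SimpleGraph.card_neighborFinset_eq_degree, hreg x₀] at this
      omega
    have hA'0 : A'.card ≠ 0 := by
      intro h0
      have : B'.Nonempty := Finset.card_pos.mp (by omega)
      obtain ⟨p, hp⟩ := this
      obtain ⟨m, hmA, _⟩ := stepB' p hp
      rw [Finset.card_eq_zero.mp h0] at hmA
      exact absurd hmA (Finset.notMem_empty m)
    have hA'1 : A'.card = 1 := by omega
    obtain ⟨u, huA'⟩ := Finset.card_eq_one.mp hA'1
    have hu : G.dist u x₀ = 1 ∧ G.dist u x₁ = 2 := by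
      have : u ∈ A' := by rw [huA']; exact Finset.mem_singleton_self u
      rwa [hA', mem_ndbD] at this
    obtain ⟨hu0, hu1⟩ := hu
    have hux₀ : G.Adj u x₀ := (hone u x₀).mp hu0
    have hB'card : B'.card = 2 := by omega
    have hB'adj : ∀ p ∈ B', G.Adj u p := by
      intro p hp
      obtain ⟨m, hmA, hpm⟩ := stepB' p hp
      rw [huA', Finset.mem_singleton] at hmA
      subst hmA
      exact hpm.symm
    have hpB' : ∀ p ∈ B', G.dist p x₀ = 2 ∧ G.dist p x₁ = 3 := by
      intro p hp; rwa [hB', mem_ndbD] at hp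
    have hx₀B' : x₀ ∉ B' := by
      intro hx; have := (hpB' x₀ hx).1; rw [SimpleGraph.dist_self] at this; omega
    have hNu : ∀ m, G.Adj u m → m = x₀ ∨ m ∈ B' := by
      have := nbr_mem hreg (v := u) (s := insert x₀ B')
        (by rw [Finset.card_insert_of_notMem hx₀B', hB'card])
        (by
          intro a haA
          rcases Finset.mem_insert.mp haA with rfl | haA
          · exact hux₀
          · exact hB'adj a haA)
      intro m hm
      have := this m hm
      rcases Finset.mem_insert.mp this with rfl | hmB
      · exact Or.inl rfl
      · exact Or.inr hmB
    -- neighbours of x₀ : x₁, w, u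
    have hune1 : u ≠ x₁ := by
      intro e; rw [e, SimpleGraph.dist_self] at hu1; omega
    have hunew : u ≠ w := by
      intro e; rw [e] at hu1; omega
    have hNx₀ : ∀ m, G.Adj x₀ m → m = x₁ ∨ m = w ∨ m = u := by
      have hcard : ({x₁, w, u} : Finset V).card = 3 := by
        rw [Finset.card_insert_of_notMem, Finset.card_insert_of_notMem, Finset.card_singleton]
        · simp only [Finset.mem_singleton]; exact fun e => hunew e.symm
        · simp only [Finset.mem_insert, Finset.mem_singleton, not_or]
          exact ⟨fun e => hwne1 e.symm, fun e => hune1 e.symm⟩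
      have := nbr_mem hreg (v := x₀) (s := {x₁, w, u}) hcard
        (by
          intro a haA
          simp only [Finset.mem_insert, Finset.mem_singleton] at haA
          rcases haA with h1 | h1 | h1 <;> rw [h1]
          · exact h
          · exact hwx₀.symm
          · exact hux₀.symm)
      intro m hm
      have := this m hm
      simpa using this
    -- u is not adjacent to w
    have h_uw : ¬ G.Adj u w := by
      intro huw
      rcases hNu w huw with rfl | hwB'
      · rw [SimpleGraph.dist_self] at hw0; omega
      · have := (hpB' w hwB').2; omega
    -- the third neighbour w' of w
    obtain ⟨w', hww', hw'ne0, hw'ne1⟩ := exists_third hreg hwx₀ hw_adj.symm h.ne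
    have hw'w : G.dist w' w = 1 := (hone w' w).mpr hww'.symm
    have hw'0 : G.dist w' x₀ = 2 := by
      have hle : G.dist w' x₀ ≤ 2 := by
        have := dist_le_adj hconn hwx₀ w'; omega
      have hne0 : G.dist w' x₀ ≠ 0 := fun e => hw'ne0 ((hzero w' x₀).mp e)
      have hne1 : G.dist w' x₀ ≠ 1 := by
        intro e
        rcases hNx₀ w' ((hone w' x₀).mp e).symm with h1 | h1 | h1
        · exact hw'ne1 h1
        · exact G.loopless.irrefl w (h1 ▸ hww')
        · exact h_uw (h1 ▸ hww').symm
      omega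
    have hw'1 : G.dist w' x₁ = 2 := by
      have hle : G.dist w' x₁ ≤ 2 := by
        have := dist_le_adj hconn hw_adj.symm w'; omega
      have hne0 : G.dist w' x₁ ≠ 0 := fun e => hw'ne1 ((hzero w' x₁).mp e)
      have hne1 : G.dist w' x₁ ≠ 1 := by
        intro e
        rcases hNx₁ w' ((hone w' x₁).mp e).symm with h1 | h1 | h1
        · exact hw'ne0 h1
        · -- w' = z : then w is adjacent to z
          have hwz : G.Adj z w := by rw [← h1]; exact hww'.symm
          rcases hNz w hwz with h2 | hwB
          · exact hwne1 h2
          · have := (hyB w hwB).2; omega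
        · exact G.loopless.irrefl w (h1 ▸ hww')
      omega
    -- neighbours of w : x₀, x₁, w'
    have hNw : ∀ m, G.Adj w m → m = x₀ ∨ m = x₁ ∨ m = w' := by
      have hcard : ({x₀, x₁, w'} : Finset V).card = 3 := by
        rw [Finset.card_insert_of_notMem, Finset.card_insert_of_notMem, Finset.card_singleton]
        · simp only [Finset.mem_singleton]; exact fun e => hw'ne1 e.symm
        · simp only [Finset.mem_insert, Finset.mem_singleton, not_or]
          exact ⟨h.ne, fun e => hw'ne0 e.symm⟩
      have := nbr_mem hreg (v := w) (s := {x₀, x₁, w'}) hcard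
        (by
          intro a haA
          simp only [Finset.mem_insert, Finset.mem_singleton] at haA
          rcases haA with h1 | h1 | h1 <;> rw [h1]
          · exact hwx₀
          · exact hw_adj.symm
          · exact hww')
      intro m hm
      have := this m hm
      simpa using this
    -- the edge (w, x₀) count
    have hWw : 1 + (ndbD G w x₀ 1 2).card + (ndbD G w x₀ 2 3).card = 4 := by
      rw [← card_ndbW hconn hd3 hwx₀]
      exact (hndb w x₀ hwx₀).1
    have hD12w : ndbD G w x₀ 1 2 = {w'} := by
      ext a
      rw [mem_ndbD, Finset.mem_singleton]
      constructor
      · rintro ⟨ha1, ha2⟩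
        rcases hNw a ((hone a w).mp ha1).symm with h1 | h1 | h1
        · rw [h1, SimpleGraph.dist_self] at ha2; omega
        · rw [h1, (hone x₁ x₀).mpr h.symm] at ha2; omega
        · exact h1
      · rintro rfl
        exact ⟨hw'w, hw'0⟩
    set Q := ndbD G w x₀ 2 3 with hQ
    have hQcard : Q.card = 2 := by
      rw [hD12w, Finset.card_singleton] at hWw; omega
    have hqQ : ∀ q ∈ Q, G.dist q w = 2 ∧ G.dist q x₀ = 3 := by
      intro q hq; rwa [hQ, mem_ndbD] at hq
    have hQadj : ∀ q ∈ Q, G.Adj w' q := by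
      intro q hq
      obtain ⟨hq2, hq3⟩ := hqQ q hq
      obtain ⟨m, hqm, hm1, hm2⟩ := step23 hconn hwx₀ hq2 hq3
      have : m ∈ ndbD G w x₀ 1 2 := mem_ndbD.mpr ⟨hm1, hm2⟩
      rw [hD12w, Finset.mem_singleton] at this
      subst this
      exact hqm.symm
    have hwQ : w ∉ Q := by
      intro hx; have := (hqQ w hx).1; rw [SimpleGraph.dist_self] at this; omega
    have hNw' : ∀ m, G.Adj w' m → m = w ∨ m ∈ Q := by
      have := nbr_mem hreg (v := w') (s := insert w Q)
        (by rw [Finset.card_insert_of_notMem hwQ, hQcard])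
        (by
          intro a haA
          rcases Finset.mem_insert.mp haA with rfl | haA
          · exact hww'.symm
          · exact hQadj a haA)
      intro m hm
      have := this m hm
      rcases Finset.mem_insert.mp this with rfl | hmQ
      · exact Or.inl rfl
      · exact Or.inr hmQ
    -- dist z u = 3
    have hzu : G.dist z u = 3 := by
      have hle : G.dist z u ≤ 3 := hd3 z u
      have hne0 : G.dist z u ≠ 0 := by
        intro e
        rw [(hzero z u).mp e] at hz0
        omega
      have hne1 : G.dist z u ≠ 1 := by
        intro e
        rcases hNz u ((hone z u).mp e) with h1 | huB
        · rw [h1, SimpleGraph.dist_self] at hu1; omega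
        · have := (hyB u huB).2; omega
      have hne2 : G.dist z u ≠ 2 := by
        intro e
        obtain ⟨m, hzm, hm1⟩ := dist_step hconn (show G.dist z u = 1 + 1 from e)
        rcases hNz m hzm with h1 | hmB
        · rw [h1, SimpleGraph.dist_comm] at hm1
          omega
        · rcases hNu m ((hone m u).mp hm1).symm with h2 | hmB'
          · have h3 := (hyB m hmB).2
            rw [h2, SimpleGraph.dist_self] at h3; omega
          · have h3 := (hyB m hmB).2
            have h2' := (hpB' m hmB').1
            omega
      omega
    -- dist w' u = 3
    have hw'u : G.dist w' u = 3 := by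
      have hle : G.dist w' u ≤ 3 := hd3 w' u
      have hne0 : G.dist w' u ≠ 0 := by
        intro e
        rw [(hzero w' u).mp e] at hw'0
        omega
      have hne1 : G.dist w' u ≠ 1 := by
        intro e
        rcases hNw' u ((hone w' u).mp e) with h1 | huQ
        · exact hunew h1
        · have := (hqQ u huQ).2; omega
      have hne2 : G.dist w' u ≠ 2 := by
        intro e
        obtain ⟨m, hw'm, hm1⟩ := dist_step hconn (show G.dist w' u = 1 + 1 from e)
        rcases hNw' m hw'm with h1 | hmQ
        · rw [h1] at hm1
          exact h_uw ((hone w u).mp hm1).symm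
        · rcases hNu m ((hone m u).mp hm1).symm with h2 | hmB'
          · have h3 := (hqQ m hmQ).2
            rw [h2, SimpleGraph.dist_self] at h3; omega
          · have h3 := (hqQ m hmQ).2
            have h2' := (hpB' m hmB').1
            omega
      omega
    -- dist w u = 2
    have hwu2 : G.dist w u = 2 := by
      have hle : G.dist w u ≤ 2 := by
        have := dist_le_adj hconn hux₀.symm w
        omega
      have hne0 : G.dist w u ≠ 0 := by
        intro e; exact hunew ((hzero w u).mp e).symm
      have hne1 : G.dist w u ≠ 1 := by
        intro e; exact h_uw ((hone w u).mp e).symm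
      omega
    -- the final count on edge (x₀, u)
    have hWu : 1 + (ndbD G x₀ u 1 2).card + (ndbD G x₀ u 2 3).card = 4 := by
      rw [← card_ndbW hconn hd3 hux₀.symm]
      exact (hndb x₀ u hux₀.symm).1
    have hD12u : ndbD G x₀ u 1 2 = {x₁, w} := by
      ext a
      rw [mem_ndbD]
      simp only [Finset.mem_insert, Finset.mem_singleton]
      constructor
      · rintro ⟨ha1, ha2⟩
        rcases hNx₀ a ((hone a x₀).mp ha1).symm with h1 | h1 | h1
        · exact Or.inl h1
        · exact Or.inr h1
        · rw [h1, SimpleGraph.dist_self] at ha2; omega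
      · rintro (h1 | h1) <;> rw [h1]
        · exact ⟨(hone x₁ x₀).mpr h.symm, by rw [SimpleGraph.dist_comm]; exact hu1⟩
        · exact ⟨hw0, hwu2⟩
    have hD12ucard : (ndbD G x₀ u 1 2).card = 2 := by
      rw [hD12u]
      exact Finset.card_pair hwne1.symm
    have hD23ucard : (ndbD G x₀ u 2 3).card = 1 := by omega
    have hzw' : z ≠ w' := by intro e; rw [e] at hz1; omega
    have hsub2 : ({z, w'} : Finset V) ⊆ ndbD G x₀ u 2 3 := by
      intro a haA
      simp only [Finset.mem_insert, Finset.mem_singleton] at haA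
      rcases haA with rfl | rfl
      · exact mem_ndbD.mpr ⟨hz0, hzu⟩
      · exact mem_ndbD.mpr ⟨hw'0, hw'u⟩
    have : 2 ≤ (ndbD G x₀ u 2 3).card := by
      calc 2 = ({z, w'} : Finset V).card := (Finset.card_pair hzw').symm
      _ ≤ _ := Finset.card_le_card hsub2
    omega
  omega

end Main

/-- In a regular NDB graph with valency `3`, diameter `3` and
`γ = 4`, for every edge `x₀x₁` we have `|D^1_2(x₁,x₀)| = |D^2_1(x₁,x₀)| = 2`. -/
theorem stmt_11 {V : Type*} [Fintype V] (G : SimpleGraph V) [DecidableRel G.Adj]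
    (hconn : G.Connected) (hreg : G.IsRegularOfDegree 3)
    (hdiam : HasDiam G 3) (hndb : IsNDB G 4)
    (x₀ x₁ : V) (h : G.Adj x₀ x₁) :
    (ndbD G x₁ x₀ 1 2).card = 2 ∧ (ndbD G x₁ x₀ 2 1).card = 2 := by
  classical
  refine ⟨key hconn hreg hdiam.1 hndb h, ?_⟩
  have hswap : ndbD G x₁ x₀ 2 1 = ndbD G x₀ x₁ 1 2 := by
    ext a; rw [mem_ndbD, mem_ndbD, and_comm]
  rw [hswap]
  exact key hconn hreg hdiam.1 hndb h.symm
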